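/- arXiv:2311.16188 — 4 statements merged into one kernel-verified Lean document; each statement's English description precedes it below -/
import Mathlib

section
/- Let G be a finite simple graph and a any vertex of G. Then for all vertices v, w: v and w are foliage-equivalent in G if and only if v and w are foliage-equivalent in the local complement τ_a(G). Consequently, the canonical foliage partition (the partition of the vertex set into foliage-equivalence classes) is invariant under local complementation, and hence under LC-equivalence. -/
variable {V : Type*}

/-- Local complementation `τ_a(G)`: toggle every edge between distinct neighbors of `a`. -/
def lcomp (G : SimpleGraph V) (a : V) : SimpleGraph V where
  Adj x y := (G.Adj x y ∧ ¬(x ≠ y ∧ G.Adj a x ∧ G.Adj a y)) ∨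
             ((x ≠ y ∧ G.Adj a x ∧ G.Adj a y) ∧ ¬ G.Adj x y)
  symm := by
    constructor
    rintro x y (⟨h1, h2⟩ | ⟨⟨hne, hx, hy⟩, h2⟩)
    · exact Or.inl ⟨h1.symm, fun h => h2 ⟨h.1.symm, h.2.2, h.2.1⟩⟩
    · exact Or.inr ⟨⟨hne.symm, hy, hx⟩, fun h => h2 h.symm⟩
  loopless := by
    constructor
    rintro x (⟨h1, _⟩ | ⟨⟨hne, _, _⟩, _⟩)
    · exact G.irrefl h1
    · exact hne rfl

/-- `(l, a)` is a leaf-axil pair: `l` has degree 1 and its unique neighbor is `a`. -/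
def IsLeafAxil (G : SimpleGraph V) (l a : V) : Prop :=
  G.Adj l a ∧ ∀ x, G.Adj l x → x = a

/-- `v` and `w` are twins: `N_v \ {w} = N_w \ {v} ≠ ∅`. -/
def IsTwin (G : SimpleGraph V) (v w : V) : Prop :=
  v ≠ w ∧ G.neighborSet v \ {w} = G.neighborSet w \ {v} ∧
    (G.neighborSet v \ {w}).Nonempty

/-- Foliage equivalence `v ∼_F w`. -/
def FoliageEq (G : SimpleGraph V) (v w : V) : Prop :=
  v = w ∨ IsLeafAxil G v w ∨ IsLeafAxil G w v ∨ IsTwin G v w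

lemma lcomp_adj_iff (G : SimpleGraph V) (a x y : V) :
    (lcomp G a).Adj x y ↔ (G.Adj x y ∧ ¬(x ≠ y ∧ G.Adj a x ∧ G.Adj a y)) ∨
      ((x ≠ y ∧ G.Adj a x ∧ G.Adj a y) ∧ ¬ G.Adj x y) := Iff.rfl

lemma lcomp_adj_of_not_left {G : SimpleGraph V} {a x : V} (hx : ¬ G.Adj a x) (y : V) :
    (lcomp G a).Adj x y ↔ G.Adj x y := by
  rw [lcomp_adj_iff]; tauto

lemma lcomp_adj_of_not_right {G : SimpleGraph V} {a y : V} (hy : ¬ G.Adj a y) (x : V) :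
    (lcomp G a).Adj x y ↔ G.Adj x y := by
  rw [lcomp_adj_iff]; tauto

lemma lcomp_adj_of_mem {G : SimpleGraph V} {a x y : V} (hxy : x ≠ y)
    (hx : G.Adj a x) (hy : G.Adj a y) : (lcomp G a).Adj x y ↔ ¬ G.Adj x y := by
  rw [lcomp_adj_iff]; tauto

lemma lcomp_adj_a {G : SimpleGraph V} (a y : V) :
    (lcomp G a).Adj a y ↔ G.Adj a y := lcomp_adj_of_not_left (G.irrefl) y

lemma lcomp_lcomp (G : SimpleGraph V) (a : V) : lcomp (lcomp G a) a = G := by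
  ext x y
  have h1 : ¬ G.Adj a a := G.irrefl
  simp only [lcomp_adj_iff]
  by_cases hxy : x = y
  · subst hxy; simp [G.irrefl]
  · tauto

lemma IsTwin.symm {G : SimpleGraph V} {v w : V} (h : IsTwin G v w) : IsTwin G w v :=
  ⟨h.1.symm, h.2.1.symm, h.2.1 ▸ h.2.2⟩

lemma FoliageEq.symm {G : SimpleGraph V} {v w : V} (h : FoliageEq G v w) : FoliageEq G w v := by
  rcases h with rfl | h | h | h
  · exact Or.inl rfl
  · exact Or.inr (Or.inr (Or.inl h))
  · exact Or.inr (Or.inl h)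
  · exact Or.inr (Or.inr (Or.inr h.symm))

lemma leaf_forward {G : SimpleGraph V} {a v w : V} (h : IsLeafAxil G v w) :
    FoliageEq (lcomp G a) v w := by
  obtain ⟨hadj, huniq⟩ := h
  by_cases hav : G.Adj a v
  · -- then a = w
    have haw : a = w := huniq a hav.symm
    subst haw
    by_cases hB : ∀ x, G.Adj a x → x = v
    · refine Or.inr (Or.inl ⟨?_, ?_⟩)
      · rw [lcomp_adj_of_not_right (G.irrefl)]; exact hadj
      · intro x hx
        rcases (lcomp_adj_iff G a v x).mp hx with ⟨hvx, _⟩ | ⟨⟨hne, _, hax⟩, _⟩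
        · exact huniq x hvx
        · exact absurd (hB x hax).symm hne
    · push_neg at hB
      obtain ⟨u, hau, huv⟩ := hB
      refine Or.inr (Or.inr (Or.inr ⟨hadj.ne, ?_, ?_⟩))
      · ext x
        simp only [Set.mem_diff, SimpleGraph.mem_neighborSet, Set.mem_singleton_iff]
        constructor
        · rintro ⟨hx, hxa⟩
          rcases (lcomp_adj_iff G a v x).mp hx with ⟨hvx, _⟩ | ⟨⟨hne, _, hax⟩, _⟩
          · exact absurd (huniq x hvx) hxa
          · exact ⟨(lcomp_adj_a a x).mpr hax, hne.symm⟩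
        · rintro ⟨hx, hxv⟩
          have hax : G.Adj a x := (lcomp_adj_a a x).mp hx
          refine ⟨(lcomp_adj_of_mem (Ne.symm hxv) hav hax).mpr ?_, hax.ne'⟩
          intro hvx
          exact hax.ne' (huniq x hvx)
      · refine ⟨u, ?_, ?_⟩
        · show (lcomp G a).Adj v u
          refine (lcomp_adj_of_mem (Ne.symm huv) hav hau).mpr ?_
          intro hvu
          exact hau.ne' (huniq u hvu)
        · exact fun h => hau.ne' (Set.mem_singleton_iff.mp h)
  · refine Or.inr (Or.inl ⟨?_, ?_⟩)
    · rw [lcomp_adj_of_not_left hav]; exact hadj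
    · intro x hx
      rw [lcomp_adj_of_not_left hav] at hx
      exact huniq x hx

lemma twin_forward_aux {G : SimpleGraph V} {a v w : V} (h : IsTwin G v w) (haw : a ≠ w) :
    FoliageEq (lcomp G a) v w := by
  obtain ⟨hvw, hset, u, hu⟩ := h
  have key : ∀ x, x ≠ v → x ≠ w → (G.Adj v x ↔ G.Adj w x) := by
    intro x hxv hxw
    have := Set.ext_iff.mp hset x
    simp only [Set.mem_diff, SimpleGraph.mem_neighborSet, Set.mem_singleton_iff] at this
    tauto
  simp only [Set.mem_diff, SimpleGraph.mem_neighborSet, Set.mem_singleton_iff] at hu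
  obtain ⟨hvu, huw⟩ := hu
  by_cases hav : a = v
  · subst hav
    by_cases hAw : G.Adj a w
    · -- (w, a) becomes a leaf-axil pair
      refine Or.inr (Or.inr (Or.inl ⟨?_, ?_⟩))
      · rw [lcomp_adj_of_not_right (G.irrefl)]; exact hAw.symm
      · intro x hx
        by_contra hxa
        have hxw : x ≠ w := fun h => (lcomp G a).irrefl (h ▸ hx)
        by_cases hax : G.Adj a x
        · have hwx : G.Adj w x := (key x hxa hxw).mp hax
          exact (lcomp_adj_of_mem hx.ne hAw hax).mp hx hwx
        · rw [lcomp_adj_of_not_right hax] at hx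
          exact hax ((key x hxa hxw).mpr hx)
    · -- non-adjacent twins: preserved
      refine Or.inr (Or.inr (Or.inr ⟨hvw, ?_, ⟨u, ?_⟩⟩))
      · ext x
        simp only [Set.mem_diff, SimpleGraph.mem_neighborSet, Set.mem_singleton_iff,
          lcomp_adj_a, lcomp_adj_of_not_left hAw]
        exact (Set.ext_iff.mp hset x).trans (by
          simp only [Set.mem_diff, SimpleGraph.mem_neighborSet, Set.mem_singleton_iff]) |>.symm
          |>.symm
      · simp only [Set.mem_diff, SimpleGraph.mem_neighborSet, Set.mem_singleton_iff, lcomp_adj_a]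
        exact ⟨hvu, huw⟩
  · -- a ≠ v, a ≠ w
    have hsym : G.Adj a v ↔ G.Adj a w := by
      rw [G.adj_comm a v, G.adj_comm a w]
      exact key a hav haw
    by_cases hA : G.Adj a v
    · have hAw : G.Adj a w := hsym.mp hA
      have inner : ∀ x, x ≠ v → x ≠ w → ((lcomp G a).Adj v x ↔ (lcomp G a).Adj w x) := by
        intro x hxv hxw
        by_cases hax : G.Adj a x
        · rw [lcomp_adj_of_mem (Ne.symm hxv) hA hax, lcomp_adj_of_mem (Ne.symm hxw) hAw hax]
          exact not_congr (key x hxv hxw)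
        · rw [lcomp_adj_of_not_right hax, lcomp_adj_of_not_right hax]
          exact key x hxv hxw
      refine Or.inr (Or.inr (Or.inr ⟨hvw, ?_, ⟨a, ?_, haw⟩⟩))
      · ext x
        simp only [Set.mem_diff, SimpleGraph.mem_neighborSet, Set.mem_singleton_iff]
        rcases eq_or_ne x v with rfl | hxv
        · simp [(lcomp G a).irrefl, Ne.symm hvw]
        · rcases eq_or_ne x w with rfl | hxw
          · simp [(lcomp G a).irrefl]
          · rw [inner x hxv hxw]; tauto
      · show (lcomp G a).Adj v a
        rw [lcomp_adj_of_not_right (G.irrefl)]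
        exact hA.symm
    · have hAw : ¬ G.Adj a w := fun h => hA (hsym.mpr h)
      refine Or.inr (Or.inr (Or.inr ⟨hvw, ?_, ⟨u, ?_⟩⟩))
      · ext x
        simp only [Set.mem_diff, SimpleGraph.mem_neighborSet, Set.mem_singleton_iff,
          lcomp_adj_of_not_left hA, lcomp_adj_of_not_left hAw]
        have := Set.ext_iff.mp hset x
        simp only [Set.mem_diff, SimpleGraph.mem_neighborSet, Set.mem_singleton_iff] at this
        exact this
      · simp only [Set.mem_diff, SimpleGraph.mem_neighborSet, Set.mem_singleton_iff,
          lcomp_adj_of_not_left hA]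
        exact ⟨hvu, huw⟩

lemma foliage_forward {G : SimpleGraph V} {a v w : V} (h : FoliageEq G v w) :
    FoliageEq (lcomp G a) v w := by
  rcases h with rfl | h | h | h
  · exact Or.inl rfl
  · exact leaf_forward h
  · exact (leaf_forward (a := a) h).symm
  · by_cases haw : a = w
    · subst haw
      exact (twin_forward_aux h.symm (Ne.symm h.1)).symm
    · exact twin_forward_aux h haw

/-- foliage-equivalence, and hence the canonical foliage partition
(the foliage-equivalence classes), is invariant under local complementation. -/
theorem foliageEq_lc_invariant {V : Type*} [Fintype V] (G : SimpleGraph V) (a : V) :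
    (∀ v w : V, FoliageEq G v w ↔ FoliageEq (lcomp G a) v w) ∧
    (∀ v : V, {w | FoliageEq G v w} = {w | FoliageEq (lcomp G a) v w}) := by
  have main : ∀ v w : V, FoliageEq G v w ↔ FoliageEq (lcomp G a) v w := by
    intro v w
    constructor
    · exact foliage_forward
    · intro h
      have := foliage_forward (a := a) h
      rwa [lcomp_lcomp] at this
  exact ⟨main, fun v => Set.ext fun w => main v w⟩
end

section
/- In the proof of LC-invariance of foliage-equivalence, the following case holds: let G be a finite simple graph, let v, w be twins in G (distinct vertices with N_v \ {w} = N_w \ {v} ≠ ∅) that are adjacent in G. Then in the local complement τ_v(G), the vertex w is a leaf whose unique neighbor (axil) is v. -/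
variable {V : Type*}

/-- adjacent twins `v, w` become a leaf-axil pair `(w, v)` after `τ_v`. -/
theorem twin_adj_lc_leafAxil {V : Type*} [Fintype V] (G : SimpleGraph V) (v w : V)
    (htwin : IsTwin G v w) (hadj : G.Adj v w) :
    IsLeafAxil (lcomp G v) w v := by
  obtain ⟨hne, hset, _⟩ := htwin
  have key : ∀ x, x ≠ v → x ≠ w → (G.Adj w x ↔ G.Adj v x) := by
    intro x hxv hxw
    constructor
    · intro h
      have : x ∈ G.neighborSet w \ {v} := ⟨h, hxv⟩
      rw [← hset] at this
      exact this.1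
    · intro h
      have : x ∈ G.neighborSet v \ {w} := ⟨h, hxw⟩
      rw [hset] at this
      exact this.1
  constructor
  · exact Or.inl ⟨hadj.symm, fun h => G.loopless.irrefl v h.2.2⟩
  · intro x hx
    by_contra hxv
    rcases hx with ⟨h1, h2⟩ | ⟨⟨hwx, hvw, hvx⟩, h2⟩
    · have hxw : x ≠ w := fun h => G.loopless.irrefl w (h ▸ h1)
      exact h2 ⟨G.ne_of_adj h1, hadj, (key x hxv hxw).mp h1⟩
    · have hxw : x ≠ w := hwx.symm
      exact h2 (((key x hxv hxw).mpr hvx))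
end

section
/- In the proof of LC-invariance of foliage-equivalence, the following case holds: let G be a finite simple graph and let (v,w) be a leaf-axil pair in G (v has degree 1 with unique neighbor w). Then in the local complement τ_w(G), the vertices v and w are twins, i.e., the neighborhood of v minus w equals the neighborhood of w minus v and this set is nonempty (provided w has degree at least 2 in G). -/
variable {V : Type*}

/-- a leaf-axil pair `(v, w)` (with `w` of degree at least 2)
becomes a twin pair after `τ_w`. -/
theorem leafAxil_lc_twin {V : Type*} [Fintype V] (G : SimpleGraph V) (v w : V)
    (h : IsLeafAxil G v w) (hdeg : 2 ≤ (G.neighborSet w).ncard) :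
    IsTwin (lcomp G w) v w := by
  obtain ⟨hvw, huniq⟩ := h
  have hne : v ≠ w := hvw.ne
  have hkey : ∀ x, x ≠ w → ((lcomp G w).Adj v x ↔ G.Adj w x ∧ x ≠ v) := by
    intro x hxw
    constructor
    · rintro (⟨h1, _⟩ | ⟨⟨hne', _, hwx⟩, _⟩)
      · exact absurd (huniq x h1) hxw
      · exact ⟨hwx, fun e => hne' e.symm⟩
    · rintro ⟨hwx, hxv⟩
      exact Or.inr ⟨⟨fun e => hxv e.symm, hvw.symm, hwx⟩,
        fun hvx => hxw (huniq x hvx)⟩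
  have hw : ∀ x, (lcomp G w).Adj w x ↔ G.Adj w x := by
    intro x
    constructor
    · rintro (⟨h1, _⟩ | ⟨⟨_, hww, _⟩, _⟩)
      · exact h1
      · exact absurd hww (G.loopless.irrefl w)
    · intro hwx
      exact Or.inl ⟨hwx, fun hc => G.loopless.irrefl w hc.2.1⟩
  refine ⟨hne, ?_, ?_⟩
  · ext x
    simp only [Set.mem_diff, SimpleGraph.mem_neighborSet, Set.mem_singleton_iff]
    constructor
    · rintro ⟨hadj, hxw⟩
      rcases (hkey x hxw).1 hadj with ⟨hwx, hxv⟩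
      exact ⟨(hw x).2 hwx, hxv⟩
    · rintro ⟨hadj, hxv⟩
      have hwx := (hw x).1 hadj
      have hxw : x ≠ w := hwx.ne'
      exact ⟨(hkey x hxw).2 ⟨hwx, hxv⟩, hxw⟩
  · have h1 : 1 < (G.neighborSet w).ncard := hdeg
    obtain ⟨a, b, ha, hb, hab⟩ := (Set.one_lt_ncard_iff (Set.toFinite _)).1 h1
    have ha' : G.Adj w a := ha
    have hb' : G.Adj w b := hb
    rcases eq_or_ne a v with rfl | hav
    · exact ⟨b, (hkey b hb'.ne').2 ⟨hb', Ne.symm hab⟩, hb'.ne'⟩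
    · exact ⟨a, (hkey a ha'.ne').2 ⟨ha', hav⟩, ha'.ne'⟩
end

section
/- (Lifted Local Complementation) Let G be a finite simple graph with a foliage partition F_W of its vertex set (a partition each of whose blocks consists of pairwise foliage-equivalent vertices of G). Let a be a vertex of G with degree greater than 1, lying in block W_a. Then the foliage graph of the locally complemented graph equals the local complement of the foliage graph at W_a: F_W(τ_a(G)) = τ_{W_a}(F_W(G)), where both foliage graphs are taken with respect to the same partition F_W. -/
variable {V : Type*}

/-- The foliage graph of `G` with respect to a partition `P` of the vertex set:
vertices are the blocks, with distinct blocks adjacent iff some vertex of one is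
adjacent in `G` to some vertex of the other. -/
def foliageGraph (G : SimpleGraph V) (P : Set (Set V)) : SimpleGraph {A : Set V // A ∈ P} where
  Adj A B := A ≠ B ∧ ∃ a ∈ A.1, ∃ b ∈ B.1, G.Adj a b
  symm := by
    constructor
    rintro A B ⟨hne, a, ha, b, hb, hab⟩
    exact ⟨hne.symm, b, hb, a, ha, hab.symm⟩
  loopless := ⟨fun A h => h.1 rfl⟩

private lemma part_unique {P : Set (Set V)} (hpart : Setoid.IsPartition P)
    {A B : Set V} (hA : A ∈ P) (hB : B ∈ P) {x : V} (hxA : x ∈ A) (hxB : x ∈ B) : A = B := by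
  obtain ⟨C, -, hu⟩ := hpart.2 x
  rw [hu A ⟨hA, hxA⟩, hu B ⟨hB, hxB⟩]

/-- Any neighbor of a vertex of `Wa` outside `Wa` is a neighbor of `a`. -/
private lemma wa_adj {G : SimpleGraph V} {P : Set (Set V)}
    (hfol : ∀ A ∈ P, ∀ v ∈ A, ∀ w ∈ A, FoliageEq G v w)
    {Wa : Set V} (hWa : Wa ∈ P) {a : V} (haWa : a ∈ Wa)
    (hdeg : 1 < (G.neighborSet a).ncard)
    {w x : V} (hw : w ∈ Wa) (hadj : G.Adj w x) : x ∈ Wa ∨ G.Adj a x := by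
  rcases hfol Wa hWa w hw a haWa with h | h | h | ⟨hne, heq, -⟩
  · subst h; exact Or.inr hadj
  · left; rw [h.2 x hadj]; exact haWa
  · exfalso
    have hsub : G.neighborSet a ⊆ {w} := fun z hz => h.2 z hz
    have := Set.ncard_le_ncard hsub (Set.finite_singleton w)
    rw [Set.ncard_singleton] at this
    omega
  · by_cases hxa : x = a
    · left; rw [hxa]; exact haWa
    · right
      have hx : x ∈ G.neighborSet w \ {a} := ⟨hadj, hxa⟩
      rw [heq] at hx
      exact hx.1

/-- Structure of a block: relative to a member `x0` adjacent to external `a`,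
every member is either a leaf with all neighbors inside the block, or a twin-type
vertex adjacent to `a` with the same outside neighbors as `x0`. -/
private lemma block_struct {G : SimpleGraph V} {P : Set (Set V)}
    (hfol : ∀ A ∈ P, ∀ v ∈ A, ∀ w ∈ A, FoliageEq G v w)
    {A : Set V} (hA : A ∈ P) {a x0 x : V} (ha : a ∉ A)
    (hx0 : x0 ∈ A) (hx : x ∈ A) (hax0 : G.Adj a x0) :
    (∀ y, G.Adj x y → y ∈ A) ∨
      (G.Adj a x ∧ ∀ y, y ∉ A → (G.Adj x y ↔ G.Adj x0 y)) := by
  rcases hfol A hA x0 hx0 x hx with h | h | h | ⟨hne, heq, -⟩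
  · subst h; exact Or.inr ⟨hax0, fun _ _ => Iff.rfl⟩
  · exfalso; exact ha (h.2 a hax0.symm ▸ hx)
  · exact Or.inl fun y hxy => (h.2 y hxy) ▸ hx0
  · right
    have hax : G.Adj a x := by
      have haN : a ∈ G.neighborSet x0 \ {x} := ⟨hax0.symm, fun hc => ha (hc ▸ hx)⟩
      rw [heq] at haN
      exact haN.1.symm
    refine ⟨hax, fun y hy => ?_⟩
    constructor
    · intro hxy
      have : y ∈ G.neighborSet x \ {x0} := ⟨hxy, fun hc => hy (hc ▸ hx0)⟩
      rw [← heq] at this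
      exact this.1
    · intro hx0y
      have : y ∈ G.neighborSet x0 \ {x} := ⟨hx0y, fun hc => hy (hc ▸ hx)⟩
      rw [heq] at this
      exact this.1

/-- Key lemma: if two blocks (not containing `a`) each contain a neighbor of `a`,
and there's some edge between them, then edges between them are exactly pairs of
neighbors of `a`. -/
private lemma cross_edges {G : SimpleGraph V} {P : Set (Set V)}
    (hpart : Setoid.IsPartition P)
    (hfol : ∀ A ∈ P, ∀ v ∈ A, ∀ w ∈ A, FoliageEq G v w)
    {A B : Set V} (hA : A ∈ P) (hB : B ∈ P) (hAB : A ≠ B)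
    {a : V} (haA : a ∉ A) (haB : a ∉ B)
    {x0 y0 x1 y1 : V} (hx0 : x0 ∈ A) (hy0 : y0 ∈ B) (hax0 : G.Adj a x0)
    (hay0 : G.Adj a y0) (hx1 : x1 ∈ A) (hy1 : y1 ∈ B) (h11 : G.Adj x1 y1)
    {x y : V} (hx : x ∈ A) (hy : y ∈ B) :
    G.Adj x y ↔ (G.Adj a x ∧ G.Adj a y) := by
  have hdAB : ∀ {z : V}, z ∈ A → z ∉ B :=
    fun hz hc => hAB (part_unique hpart hA hB hz hc)
  have hdBA : ∀ {z : V}, z ∈ B → z ∉ A :=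
    fun hz hc => hAB (part_unique hpart hA hB hc hz)
  have hx0y1 : G.Adj x0 y1 := by
    rcases block_struct hfol hA haA hx0 hx1 hax0 with hleaf | ⟨-, hiff⟩
    · exact absurd hy1 (hdAB (hleaf y1 h11))
    · exact (hiff y1 (hdBA hy1)).mp h11
  have hx0y0 : G.Adj x0 y0 := by
    rcases block_struct hfol hB haB hy0 hy1 hay0 with hleaf | ⟨-, hiff⟩
    · exact absurd hx0 (hdBA (hleaf x0 hx0y1.symm))
    · exact ((hiff x0 (hdAB hx0)).mp hx0y1.symm).symm
  rcases block_struct hfol hA haA hx0 hx hax0 with hlx | ⟨hax, hix⟩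
  · exact iff_of_false (fun hxy => (hdAB (hlx y hxy)) hy)
      (fun hc => haA (hlx a hc.1.symm))
  · rcases block_struct hfol hB haB hy0 hy hay0 with hly | ⟨hay, hiy⟩
    · exact iff_of_false (fun hxy => (hdBA (hly x hxy.symm)) hx)
        (fun hc => haB (hly a hc.2.symm))
    · have hx0y : G.Adj x0 y := ((hiy x0 (hdAB hx0)).mpr hx0y0.symm).symm
      exact iff_of_true ((hix y (hdBA hy)).mpr hx0y) ⟨hax, hay⟩

/-- Block adjacency to `Wa` reduces to adjacency to `a`. -/
private lemma wa_block_adj {G : SimpleGraph V} {P : Set (Set V)}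
    (hpart : Setoid.IsPartition P)
    (hfol : ∀ A ∈ P, ∀ v ∈ A, ∀ w ∈ A, FoliageEq G v w)
    {Wa : Set V} (hWa : Wa ∈ P) {a : V} (haWa : a ∈ Wa)
    (hdeg : 1 < (G.neighborSet a).ncard)
    {A : Set V} (hA : A ∈ P) (hAWa : A ≠ Wa) :
    (∃ w ∈ Wa, ∃ x ∈ A, G.Adj w x) ↔ ∃ x ∈ A, G.Adj a x := by
  constructor
  · rintro ⟨w, hw, x, hx, h⟩
    rcases wa_adj hfol hWa haWa hdeg hw h with hxWa | hax
    · exact absurd (part_unique hpart hA hWa hx hxWa) hAWa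
    · exact ⟨x, hx, hax⟩
  · rintro ⟨x, hx, hax⟩
    exact ⟨a, haWa, x, hx, hax⟩

/-- The case where one block is `Wa`: local complementation doesn't change
block adjacency of `Wa` to other blocks. -/
private lemma lcompE_wa {G : SimpleGraph V} {P : Set (Set V)}
    (hpart : Setoid.IsPartition P)
    (hfol : ∀ A ∈ P, ∀ v ∈ A, ∀ w ∈ A, FoliageEq G v w)
    {Wa : Set V} (hWa : Wa ∈ P) {a : V} (haWa : a ∈ Wa)
    (hdeg : 1 < (G.neighborSet a).ncard)
    {B : Set V} (hB : B ∈ P) (hBWa : B ≠ Wa) :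
    (∃ w ∈ Wa, ∃ y ∈ B, (lcomp G a).Adj w y) ↔ ∃ w ∈ Wa, ∃ y ∈ B, G.Adj w y := by
  constructor
  · rintro ⟨w, hw, y, hy, h | h⟩
    · exact ⟨w, hw, y, hy, h.1⟩
    · exact ⟨a, haWa, y, hy, h.1.2.2⟩
  · rintro ⟨w, hw, y, hy, h⟩
    have hay : G.Adj a y := by
      rcases wa_adj hfol hWa haWa hdeg hw h with hyWa | hay
      · exact absurd (part_unique hpart hB hWa hy hyWa) hBWa
      · exact hay
    exact ⟨a, haWa, y, hy, Or.inl ⟨hay, fun hc => G.irrefl hc.2.1⟩⟩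

/-- The main combinatorial equivalence, at the level of sets. -/
private lemma main_iff {G : SimpleGraph V} {P : Set (Set V)}
    (hpart : Setoid.IsPartition P)
    (hfol : ∀ A ∈ P, ∀ v ∈ A, ∀ w ∈ A, FoliageEq G v w)
    {Wa : Set V} (hWa : Wa ∈ P) {a : V} (haWa : a ∈ Wa)
    (hdeg : 1 < (G.neighborSet a).ncard)
    {A B : Set V} (hA : A ∈ P) (hB : B ∈ P) (hAB : A ≠ B) :
    (∃ x ∈ A, ∃ y ∈ B, (lcomp G a).Adj x y) ↔
      ((∃ x ∈ A, ∃ y ∈ B, G.Adj x y) ∧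
        ¬((Wa ≠ A ∧ ∃ w ∈ Wa, ∃ x ∈ A, G.Adj w x) ∧
          (Wa ≠ B ∧ ∃ w ∈ Wa, ∃ y ∈ B, G.Adj w y))) ∨
      (((Wa ≠ A ∧ ∃ w ∈ Wa, ∃ x ∈ A, G.Adj w x) ∧
          (Wa ≠ B ∧ ∃ w ∈ Wa, ∃ y ∈ B, G.Adj w y)) ∧
        ¬(∃ x ∈ A, ∃ y ∈ B, G.Adj x y)) := by
  by_cases hAWa : A = Wa
  · subst hAWa
    have h1 : (∃ x ∈ A, ∃ y ∈ B, (lcomp G a).Adj x y) ↔ ∃ x ∈ A, ∃ y ∈ B, G.Adj x y :=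
      lcompE_wa hpart hfol hWa haWa hdeg hB (Ne.symm hAB)
    rw [h1]
    constructor
    · intro hE
      exact Or.inl ⟨hE, fun hc => hc.1.1 rfl⟩
    · rintro (⟨hE, -⟩ | ⟨⟨⟨hc, -⟩, -⟩, -⟩)
      · exact hE
      · exact absurd rfl hc
  · by_cases hBWa : B = Wa
    · subst hBWa
      have h1 : (∃ x ∈ A, ∃ y ∈ B, (lcomp G a).Adj x y) ↔ ∃ x ∈ A, ∃ y ∈ B, G.Adj x y := by
        rw [show (∃ x ∈ A, ∃ y ∈ B, (lcomp G a).Adj x y) ↔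
            (∃ y ∈ B, ∃ x ∈ A, (lcomp G a).Adj y x) from
          ⟨fun ⟨x, hx, y, hy, h⟩ => ⟨y, hy, x, hx, h.symm⟩,
           fun ⟨y, hy, x, hx, h⟩ => ⟨x, hx, y, hy, h.symm⟩⟩,
          lcompE_wa hpart hfol hWa haWa hdeg hA hAWa]
        exact ⟨fun ⟨y, hy, x, hx, h⟩ => ⟨x, hx, y, hy, h.symm⟩,
          fun ⟨x, hx, y, hy, h⟩ => ⟨y, hy, x, hx, h.symm⟩⟩
      rw [h1]
      constructor
      · intro hE
        exact Or.inl ⟨hE, fun hc => hc.2.1 rfl⟩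
      · rintro (⟨hE, -⟩ | ⟨⟨-, ⟨hc, -⟩⟩, -⟩)
        · exact hE
        · exact absurd rfl hc
    · -- neither block is Wa
      have haA : a ∉ A := fun hc => hAWa (part_unique hpart hA hWa hc haWa)
      have haB : a ∉ B := fun hc => hBWa (part_unique hpart hB hWa hc haWa)
      have hdAB : ∀ {z : V}, z ∈ A → z ∉ B :=
        fun hz hc => hAB (part_unique hpart hA hB hz hc)
      have hrA := wa_block_adj hpart hfol hWa haWa hdeg hA hAWa
      have hrB := wa_block_adj hpart hfol hWa haWa hdeg hB hBWa
      by_cases hNA : ∃ x ∈ A, G.Adj a x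
      · by_cases hNB : ∃ y ∈ B, G.Adj a y
        · obtain ⟨x0, hx0, hax0⟩ := hNA
          obtain ⟨y0, hy0, hay0⟩ := hNB
          by_cases hE : ∃ x ∈ A, ∃ y ∈ B, G.Adj x y
          · -- everything toggles off: no lcomp edges
            obtain ⟨x1, hx1, y1, hy1, h11⟩ := hE
            have hL : ¬∃ x ∈ A, ∃ y ∈ B, (lcomp G a).Adj x y := by
              rintro ⟨x, hx, y, hy, h | h⟩
              · exact h.2 ⟨fun hc => (hdAB hx) (hc ▸ hy),
                  (cross_edges hpart hfol hA hB hAB haA haB hx0 hy0 hax0 hay0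
                    hx1 hy1 h11 hx hy).mp h.1⟩
              · exact h.2 ((cross_edges hpart hfol hA hB hAB haA haB hx0 hy0 hax0 hay0
                    hx1 hy1 h11 hx hy).mpr ⟨h.1.2.1, h.1.2.2⟩)
            have hC1 : Wa ≠ A ∧ ∃ w ∈ Wa, ∃ x ∈ A, G.Adj w x :=
              ⟨Ne.symm hAWa, hrA.mpr ⟨x0, hx0, hax0⟩⟩
            have hC2 : Wa ≠ B ∧ ∃ w ∈ Wa, ∃ y ∈ B, G.Adj w y :=
              ⟨Ne.symm hBWa, hrB.mpr ⟨y0, hy0, hay0⟩⟩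
            have hE' : ∃ x ∈ A, ∃ y ∈ B, G.Adj x y := ⟨x1, hx1, y1, hy1, h11⟩
            refine iff_of_false hL ?_
            rintro (⟨-, hc⟩ | ⟨-, hc⟩)
            · exact hc ⟨hC1, hC2⟩
            · exact hc hE'
          · -- new edge x0 y0 appears
            have hL : ∃ x ∈ A, ∃ y ∈ B, (lcomp G a).Adj x y :=
              ⟨x0, hx0, y0, hy0, Or.inr ⟨⟨fun hc => (hdAB hx0) (hc ▸ hy0), hax0, hay0⟩,
                fun hc => hE ⟨x0, hx0, y0, hy0, hc⟩⟩⟩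
            have hC1 : Wa ≠ A ∧ ∃ w ∈ Wa, ∃ x ∈ A, G.Adj w x :=
              ⟨Ne.symm hAWa, hrA.mpr ⟨x0, hx0, hax0⟩⟩
            have hC2 : Wa ≠ B ∧ ∃ w ∈ Wa, ∃ y ∈ B, G.Adj w y :=
              ⟨Ne.symm hBWa, hrB.mpr ⟨y0, hy0, hay0⟩⟩
            exact iff_of_true hL (Or.inr ⟨⟨hC1, hC2⟩, hE⟩)
        · -- B has no neighbor of a: nothing toggles
          have h1 : (∃ x ∈ A, ∃ y ∈ B, (lcomp G a).Adj x y) ↔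
              ∃ x ∈ A, ∃ y ∈ B, G.Adj x y := by
            constructor
            · rintro ⟨x, hx, y, hy, h | h⟩
              · exact ⟨x, hx, y, hy, h.1⟩
              · exact absurd ⟨y, hy, h.1.2.2⟩ hNB
            · rintro ⟨x, hx, y, hy, h⟩
              exact ⟨x, hx, y, hy, Or.inl ⟨h, fun hc => hNB ⟨y, hy, hc.2.2⟩⟩⟩
          have h2 : ¬(Wa ≠ B ∧ ∃ w ∈ Wa, ∃ y ∈ B, G.Adj w y) :=
            fun hc => hNB (hrB.mp hc.2)
          rw [h1]
          constructor
          · intro hE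
            exact Or.inl ⟨hE, fun hc => h2 hc.2⟩
          · rintro (⟨hE, -⟩ | ⟨⟨-, hc2⟩, -⟩)
            · exact hE
            · exact absurd hc2 h2
      · -- A has no neighbor of a
        have h1 : (∃ x ∈ A, ∃ y ∈ B, (lcomp G a).Adj x y) ↔
            ∃ x ∈ A, ∃ y ∈ B, G.Adj x y := by
          constructor
          · rintro ⟨x, hx, y, hy, h | h⟩
            · exact ⟨x, hx, y, hy, h.1⟩
            · exact absurd ⟨x, hx, h.1.2.1⟩ hNA
          · rintro ⟨x, hx, y, hy, h⟩
            exact ⟨x, hx, y, hy, Or.inl ⟨h, fun hc => hNA ⟨x, hx, hc.2.1⟩⟩⟩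
        have h2 : ¬(Wa ≠ A ∧ ∃ w ∈ Wa, ∃ x ∈ A, G.Adj w x) :=
          fun hc => hNA (hrA.mp hc.2)
        rw [h1]
        constructor
        · intro hE
          exact Or.inl ⟨hE, fun hc => h2 hc.1⟩
        · rintro (⟨hE, -⟩ | ⟨⟨hc1, -⟩, -⟩)
          · exact hE
          · exact absurd hc1 h2

private lemma lcomp_adj' {G : SimpleGraph V} {a x y : V} :
    (lcomp G a).Adj x y ↔
      (G.Adj x y ∧ ¬(x ≠ y ∧ G.Adj a x ∧ G.Adj a y)) ∨
      ((x ≠ y ∧ G.Adj a x ∧ G.Adj a y) ∧ ¬ G.Adj x y) := Iff.rfl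

private lemma foliageGraph_adj' {G : SimpleGraph V} {P : Set (Set V)}
    {A B : {A : Set V // A ∈ P}} :
    (foliageGraph G P).Adj A B ↔ A ≠ B ∧ ∃ a ∈ A.1, ∃ b ∈ B.1, G.Adj a b := Iff.rfl

/-- Lifted Local Complementation. -/
theorem lifted_local_complementation {V : Type*} [Fintype V] (G : SimpleGraph V)
    (P : Set (Set V)) (hpart : Setoid.IsPartition P)
    (hfol : ∀ A ∈ P, ∀ v ∈ A, ∀ w ∈ A, FoliageEq G v w)
    (a : V) (hdeg : 1 < (G.neighborSet a).ncard)
    (Wa : Set V) (hWa : Wa ∈ P) (haWa : a ∈ Wa) :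
    foliageGraph (lcomp G a) P = lcomp (foliageGraph G P) ⟨Wa, hWa⟩ := by
  ext ⟨A, hA⟩ ⟨B, hB⟩
  simp only [lcomp_adj', foliageGraph_adj', ne_eq, Subtype.mk.injEq]
  by_cases hAB : A = B
  · subst hAB
    simp
  · have key := main_iff hpart hfol hWa haWa hdeg hA hB hAB
    simp only [ne_eq] at key
    constructor
    · rintro ⟨-, hL⟩
      rcases key.mp hL with ⟨hE, hT⟩ | ⟨hC, hE⟩
      · exact Or.inl ⟨⟨hAB, hE⟩, fun hc => hT hc.2⟩
      · exact Or.inr ⟨⟨hAB, hC⟩, fun hc => hE hc.2⟩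
    · rintro (⟨⟨-, hE⟩, hT⟩ | ⟨⟨-, hC⟩, hE⟩)
      · exact ⟨hAB, key.mpr (Or.inl ⟨hE, fun hc => hT ⟨hAB, hc⟩⟩)⟩
      · exact ⟨hAB, key.mpr (Or.inr ⟨hC, fun hc => hE ⟨hAB, hc⟩⟩)⟩
end
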